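/- Let m ≥ 1, let T⁽¹⁾ and T⁽²⁾ be distinct m-bit templates, and let B be drawn uniformly at random from the 2^M equiprobable M-bit blocks. For a template T and a position k with 0 ≤ k ≤ M−m, let I_k^{(T)} be the indicator that B(k+i) = T(i) for all i < m. For d with 1 ≤ d ≤ m−1 define e_d = 1 if T⁽¹⁾(i) = T⁽²⁾(i+d) for all i < m−d and e_d = 0 otherwise, and define e_{−d} = 1 if T⁽¹⁾(i+d) = T⁽²⁾(i) for all i < m−d and e_{−d} = 0 otherwise. Then for positions k, l with 0 ≤ k, l ≤ M−m: E[I_k^{(T⁽¹⁾)} I_l^{(T⁽²⁾)}] = 0 if k = l; E[I_k^{(T⁽¹⁾)} I_l^{(T⁽²⁾)}] = e_{k−l}/2^{m+|k−l|} if 1 ≤ |k−l| ≤ m−1; and E[I_k^{(T⁽¹⁾)} I_l^{(T⁽²⁾)}] = 1/2^{2m} if |k−l| ≥ m. -/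
import Mathlib


open scoped Classical

/-- `T` occurs in the block `B` at position `k`: `B (k+i) = T i` for all `i < m`. -/
def occursAt {m M : ℕ} (T : Fin m → Bool) (B : Fin M → Bool) (k : ℕ) : Prop :=
  ∀ i : Fin m, ∀ h : k + i.1 < M, B ⟨k + i.1, h⟩ = T i

/-- Expectation of `f` when the block is drawn uniformly from the `2^M` `M`-bit blocks. -/
noncomputable def unifExp (M : ℕ) (f : (Fin M → Bool) → ℝ) : ℝ :=
  (∑ B : Fin M → Bool, f B) / 2 ^ M

/-- `e_d` for `d ≥ 1`: equals `1` if `T¹(i) = T²(i+d)` for all `i < m - d`, else `0`. -/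
noncomputable def ePlus {m : ℕ} (T1 T2 : Fin m → Bool) (d : ℕ) : ℝ :=
  if ∀ i : ℕ, ∀ h : i < m - d, T1 ⟨i, by omega⟩ = T2 ⟨i + d, by omega⟩ then 1 else 0

/-- `e_{-d}` for `d ≥ 1`: equals `1` if `T¹(i+d) = T²(i)` for all `i < m - d`, else `0`. -/
noncomputable def eMinus {m : ℕ} (T1 T2 : Fin m → Bool) (d : ℕ) : ℝ :=
  if ∀ i : ℕ, ∀ h : i < m - d, T1 ⟨i + d, by omega⟩ = T2 ⟨i, by omega⟩ then 1 else 0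

lemma sum_indicator_constraints (M : ℕ) (A : Finset (Fin M)) (v : Fin M → Bool) :
    (∑ B : Fin M → Bool, if ∀ j ∈ A, B j = v j then (1:ℝ) else 0)
      = 2 ^ (M - A.card) := by
  classical
  have e : {B : Fin M → Bool // ∀ j ∈ A, B j = v j} ≃ ({j : Fin M // j ∉ A} → Bool) :=
    { toFun := fun B j => B.1 j.1
      invFun := fun f => ⟨fun j => if h : j ∈ A then v j else f ⟨j, h⟩,
        fun j hj => dif_pos hj⟩
      left_inv := fun B => by
        ext j
        by_cases h : j ∈ A
        · simp [h, (B.2 j h).symm]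
        · simp [h]
      right_inv := fun f => by
        funext j
        simp [j.2] }
  have hcard : (Finset.univ.filter (fun B : Fin M → Bool => ∀ j ∈ A, B j = v j)).card
      = 2 ^ (M - A.card) := by
    rw [← Fintype.card_subtype]
    rw [Fintype.card_congr e]
    simp [Fintype.card_fun, Fintype.card_subtype_compl]
  rw [Finset.sum_boole, hcard]
  push_cast
  ring

def constrSet (m M k l : ℕ) (hk : k + m ≤ M) (hl : l + m ≤ M) : Finset (Fin M) :=
  Finset.attachFin (Finset.Ico k (k+m) ∪ Finset.Ico l (l+m))
    (fun j hj => by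
      simp only [Finset.mem_union, Finset.mem_Ico] at hj; omega)

noncomputable def constrVal (m M k l : ℕ) (T1 T2 : Fin m → Bool) (j : Fin M) : Bool :=
  if h : k ≤ j.1 ∧ j.1 < k + m then T1 ⟨j.1 - k, by omega⟩
  else if h' : l ≤ j.1 ∧ j.1 < l + m then T2 ⟨j.1 - l, by omega⟩
  else false

lemma mem_constrSet {m M k l : ℕ} {hk : k + m ≤ M} {hl : l + m ≤ M} {j : Fin M} :
    j ∈ constrSet m M k l hk hl ↔ (k ≤ j.1 ∧ j.1 < k + m) ∨ (l ≤ j.1 ∧ j.1 < l + m) := by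
  simp [constrSet, Finset.mem_attachFin, Finset.mem_union, Finset.mem_Ico]

lemma occurs_iff (m M k l : ℕ) (T1 T2 : Fin m → Bool) (hk : k + m ≤ M) (hl : l + m ≤ M)
    (hlk : l ≤ k)
    (hcompat : ∀ i : ℕ, ∀ h : i < m - (k - l), T1 ⟨i, by omega⟩ = T2 ⟨i + (k-l), by omega⟩)
    (B : Fin M → Bool) :
    (occursAt T1 B k ∧ occursAt T2 B l) ↔
      ∀ j ∈ constrSet m M k l hk hl, B j = constrVal m M k l T1 T2 j := by
  constructor
  · rintro ⟨h1, h2⟩ j hj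
    rw [mem_constrSet] at hj
    unfold constrVal
    by_cases hc : k ≤ j.1 ∧ j.1 < k + m
    · rw [dif_pos hc]
      have := h1 ⟨j.1 - k, by omega⟩ (by omega)
      convert this using 2
      · exact Fin.ext (by simp; omega)
    · rw [dif_neg hc]
      have hc' : l ≤ j.1 ∧ j.1 < l + m := by omega
      rw [dif_pos hc']
      have := h2 ⟨j.1 - l, by omega⟩ (by omega)
      convert this using 2
      · exact Fin.ext (by simp; omega)
  · intro h
    constructor
    · intro i hi
      have hj : (⟨k + i.1, hi⟩ : Fin M) ∈ constrSet m M k l hk hl := by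
        rw [mem_constrSet]
        have := i.2
        simp only [Fin.val_mk]
        omega
      have := h _ hj
      rw [this]
      unfold constrVal
      rw [dif_pos (by have := i.2; simp only [Fin.val_mk]; omega)]
      congr 1
      exact Fin.ext (by simp)
    · intro i hi
      have hj : (⟨l + i.1, hi⟩ : Fin M) ∈ constrSet m M k l hk hl := by
        rw [mem_constrSet]
        have := i.2
        simp only [Fin.val_mk]
        omega
      have := h _ hj
      rw [this]
      unfold constrVal
      by_cases hc : k ≤ l + i.1 ∧ l + i.1 < k + m
      · rw [dif_pos hc]
        have hlt : l + i.1 - k < m - (k - l) := by omega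
        have := hcompat (l + i.1 - k) hlt
        rw [this]
        congr 1
        exact Fin.ext (by simp; omega)
      · rw [dif_neg hc, dif_pos (by have := i.2; simp only [Fin.val_mk]; omega)]
        congr 1
        exact Fin.ext (by simp)

lemma exp_main (m M k l : ℕ) (T1 T2 : Fin m → Bool) (hk : k + m ≤ M) (hl : l + m ≤ M)
    (hlk : l ≤ k)
    (hcompat : ∀ i : ℕ, ∀ h : i < m - (k - l), T1 ⟨i, by omega⟩ = T2 ⟨i + (k-l), by omega⟩) :
    unifExp M (fun B => (if occursAt T1 B k then (1:ℝ) else 0) *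
        (if occursAt T2 B l then (1:ℝ) else 0))
      = 2 ^ (M - (constrSet m M k l hk hl).card) / 2 ^ M := by
  unfold unifExp
  congr 1
  rw [← sum_indicator_constraints M (constrSet m M k l hk hl) (constrVal m M k l T1 T2)]
  apply Finset.sum_congr rfl
  intro B _
  have hiff := occurs_iff m M k l T1 T2 hk hl hlk hcompat B
  by_cases h1 : occursAt T1 B k <;> by_cases h2 : occursAt T2 B l <;>
    simp [h1, h2, ← hiff]

lemma pow_div_pow (c M : ℕ) (h : c ≤ M) :
    (2:ℝ) ^ (M - c) / 2 ^ M = 1 / 2 ^ c := by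
  rw [div_eq_div_iff (by positivity) (by positivity), one_mul, ← pow_add]
  congr 1
  omega

/-- auxiliary: overlap case, l ≤ k. -/
lemma aux_overlap (m M k l : ℕ) (T1 T2 : Fin m → Bool) (hk : k + m ≤ M) (hl : l + m ≤ M)
    (hlk : l ≤ k) (hd1 : 1 ≤ k - l) (hd2 : k - l ≤ m - 1) :
    unifExp M (fun B => (if occursAt T1 B k then (1:ℝ) else 0) *
        (if occursAt T2 B l then (1:ℝ) else 0))
      = ePlus T1 T2 (k - l) / 2 ^ (m + (k - l)) := by
  by_cases hc : ∀ i : ℕ, ∀ h : i < m - (k - l),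
      T1 ⟨i, by omega⟩ = T2 ⟨i + (k-l), by omega⟩
  · rw [exp_main m M k l T1 T2 hk hl hlk hc]
    have hcard : (constrSet m M k l hk hl).card = m + (k - l) := by
      unfold constrSet
      rw [Finset.card_attachFin]
      have : Finset.Ico k (k+m) ∪ Finset.Ico l (l+m) = Finset.Ico l (k+m) := by
        ext j
        simp only [Finset.mem_union, Finset.mem_Ico]
        omega
      rw [this, Nat.card_Ico]
      omega
    rw [hcard, pow_div_pow _ _ (by omega)]
    rw [ePlus, if_pos hc, one_div]
  · have hz : ∀ B : Fin M → Bool,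
        (if occursAt T1 B k then (1:ℝ) else 0) * (if occursAt T2 B l then (1:ℝ) else 0) = 0 := by
      intro B
      by_cases h1 : occursAt T1 B k
      · by_cases h2 : occursAt T2 B l
        · exfalso
          apply hc
          intro i hi
          have e1 := h1 ⟨i, by omega⟩ (by omega)
          have e2 := h2 ⟨i + (k - l), by omega⟩ (by omega)
          have : (⟨k + i, by omega⟩ : Fin M) = ⟨l + (i + (k - l)), by omega⟩ :=
            Fin.ext (by simp; omega)
          rw [← e1, ← e2, this]
        · simp [h2]
      · simp [h1]
    rw [ePlus, if_neg hc]
    simp only [unifExp]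
    rw [Finset.sum_congr rfl (fun B _ => hz B)]
    simp

/-- auxiliary: disjoint case, l + m ≤ k. -/
lemma aux_disjoint (m M k l : ℕ) (T1 T2 : Fin m → Bool) (hk : k + m ≤ M) (hl : l + m ≤ M)
    (hlk : l + m ≤ k) :
    unifExp M (fun B => (if occursAt T1 B k then (1:ℝ) else 0) *
        (if occursAt T2 B l then (1:ℝ) else 0))
      = 1 / 2 ^ (2 * m) := by
  have hc : ∀ i : ℕ, ∀ h : i < m - (k - l),
      T1 ⟨i, by omega⟩ = T2 ⟨i + (k-l), by omega⟩ := by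
    intro i hi
    omega
  rw [exp_main m M k l T1 T2 hk hl (by omega) hc]
  have hcard : (constrSet m M k l hk hl).card = 2 * m := by
    unfold constrSet
    rw [Finset.card_attachFin]
    rw [Finset.card_union_of_disjoint]
    · rw [Nat.card_Ico, Nat.card_Ico]; omega
    · rw [Finset.disjoint_left]
      intro a ha hb
      simp only [Finset.mem_Ico] at ha hb
      omega
  rw [hcard, pow_div_pow _ _ (by omega)]

lemma ePlus_swap {m : ℕ} (T1 T2 : Fin m → Bool) (d : ℕ) :
    ePlus T2 T1 d = eMinus T1 T2 d := by
  unfold ePlus eMinus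
  apply if_congr _ rfl rfl
  constructor <;> intro h i hi <;> exact (h i hi).symm

lemma unifExp_comm (M : ℕ) {m : ℕ} (T1 T2 : Fin m → Bool) (k l : ℕ) :
    unifExp M (fun B => (if occursAt T1 B k then (1:ℝ) else 0) *
        (if occursAt T2 B l then (1:ℝ) else 0))
      = unifExp M (fun B => (if occursAt T2 B l then (1:ℝ) else 0) *
        (if occursAt T1 B k then (1:ℝ) else 0)) := by
  unfold unifExp
  congr 1
  exact Finset.sum_congr rfl (fun B _ => mul_comm _ _)

theorem expectation_indicator_products_two_templates (m M k l : ℕ) (hm : 1 ≤ m)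
    (T1 T2 : Fin m → Bool) (hT : T1 ≠ T2) (hk : k + m ≤ M) (hl : l + m ≤ M) :
    (k = l →
      unifExp M (fun B => (if occursAt T1 B k then (1:ℝ) else 0) *
        (if occursAt T2 B l then (1:ℝ) else 0)) = 0) ∧
    (1 ≤ Nat.dist k l → Nat.dist k l ≤ m - 1 →
      unifExp M (fun B => (if occursAt T1 B k then (1:ℝ) else 0) *
        (if occursAt T2 B l then (1:ℝ) else 0))
        = (if l ≤ k then ePlus T1 T2 (k - l) else eMinus T1 T2 (l - k))
            / 2 ^ (m + Nat.dist k l)) ∧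
    (m ≤ Nat.dist k l →
      unifExp M (fun B => (if occursAt T1 B k then (1:ℝ) else 0) *
        (if occursAt T2 B l then (1:ℝ) else 0)) = 1 / 2 ^ (2 * m)) := by
  refine ⟨?_, ?_, ?_⟩
  · intro hkl
    subst hkl
    have hz : ∀ B : Fin M → Bool,
        (if occursAt T1 B k then (1:ℝ) else 0) * (if occursAt T2 B k then (1:ℝ) else 0) = 0 := by
      intro B
      by_cases h1 : occursAt T1 B k
      · by_cases h2 : occursAt T2 B k
        · exfalso
          apply hT
          funext i
          have e1 := h1 i (by have := i.2; omega)
          have e2 := h2 i (by have := i.2; omega)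
          rw [← e1, ← e2]
        · simp [h2]
      · simp [h1]
    simp only [unifExp]
    rw [Finset.sum_congr rfl (fun B _ => hz B)]
    simp
  · intro hd1 hd2
    by_cases hlk : l ≤ k
    · rw [if_pos hlk]
      have hdist : Nat.dist k l = k - l := Nat.dist_eq_sub_of_le_right hlk
      rw [hdist] at hd1 hd2 ⊢
      exact aux_overlap m M k l T1 T2 hk hl hlk hd1 hd2
    · rw [if_neg hlk]
      have hdist : Nat.dist k l = l - k := Nat.dist_eq_sub_of_le (by omega)
      rw [hdist] at hd1 hd2 ⊢
      rw [unifExp_comm]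
      rw [aux_overlap m M l k T2 T1 hl hk (by omega) hd1 hd2]
      rw [ePlus_swap]
  · intro hd
    by_cases hlk : l ≤ k
    · have hdist : Nat.dist k l = k - l := Nat.dist_eq_sub_of_le_right hlk
      rw [hdist] at hd
      exact aux_disjoint m M k l T1 T2 hk hl (by omega)
    · have hdist : Nat.dist k l = l - k := Nat.dist_eq_sub_of_le (by omega)
      rw [hdist] at hd
      rw [unifExp_comm]
      exact aux_disjoint m M l k T2 T1 hl hk (by omega)
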